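/- For every set Δ ≠ {[0,1]} of pairwise disjoint non-degenerate closed subintervals of [0,1], there exists a reparametrization φ of [0,1] whose set of stop intervals is exactly Δ. -/

import Mathlib

open Set Classical

/-- A reparametrization of the unit interval: continuous, weakly increasing,
maps `[0,1]` into `[0,1]`, preserves endpoints. -/
def Reparam (φ : ℝ → ℝ) : Prop :=
  ContinuousOn φ (Set.Icc 0 1) ∧ MonotoneOn φ (Set.Icc 0 1) ∧
  Set.MapsTo φ (Set.Icc 0 1) (Set.Icc 0 1) ∧ φ 0 = 0 ∧ φ 1 = 1

/-- `J` is a stop interval of `φ`: a non-degenerate preimage of a point. -/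
def IsStopIntervalOf (φ : ℝ → ℝ) (J : Set ℝ) : Prop :=
  ∃ t : ℝ, Set.Icc 0 1 ∩ φ ⁻¹' {t} = J ∧ J.Nontrivial

/-- `t` is a stop value of `φ`. -/
def IsStopValueOf (φ : ℝ → ℝ) (t : ℝ) : Prop :=
  (Set.Icc 0 1 ∩ φ ⁻¹' {t}).Nontrivial

/-- The natural order on disjoint intervals: every point of `J` is below every point of `J'`. -/
def IntLT (J J' : Set ℝ) : Prop := ∀ x ∈ J, ∀ y ∈ J', x < y

/-- Supremum with the convention that the sup of the empty family is `0`. -/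
noncomputable def sSup0 (S : Set ℝ) : ℝ := if S.Nonempty then sSup S else 0

/-- Infimum with the convention that the inf of the empty family is `1`. -/
noncomputable def sInf1 (S : Set ℝ) : ℝ := if S.Nonempty then sInf S else 1

section AuxStopProof

open MeasureTheory


noncomputable def dig (x : ℝ) (n : ℕ) : Bool := decide (⌊x * 2^(n+1)⌋ % 2 = 1)

lemma measurable_dig : Measurable (fun x : ℝ => dig x) := by
  apply measurable_pi_lambda
  intro n
  exact Measurable.comp (measurable_from_top (f := fun k : ℤ => decide (k % 2 = 1)))
    ((measurable_id.mul_const _).floor)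

lemma dig_floor_eq {x y : ℝ} (hx : x ∈ Ico (0:ℝ) 1) (hy : y ∈ Ico (0:ℝ) 1)
    (h : dig x = dig y) : ∀ n : ℕ, ⌊x * 2^n⌋ = ⌊y * 2^n⌋ := by
  intro n
  induction n with
  | zero =>
    simp only [pow_zero, mul_one]
    rw [Int.floor_eq_zero_iff.2 (by exact_mod_cast hx), Int.floor_eq_zero_iff.2 (by exact_mod_cast hy)]
  | succ n ih =>
    have key : ∀ z : ℝ, 2 * ⌊z * 2^n⌋ ≤ ⌊z * 2^(n+1)⌋ ∧ ⌊z * 2^(n+1)⌋ < 2 * ⌊z * 2^n⌋ + 2 := by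
      intro z
      constructor
      · apply Int.le_floor.2
        push_cast
        calc (2:ℝ) * ⌊z * 2^n⌋ ≤ 2 * (z * 2^n) := by
              have := Int.floor_le (z * 2^n); nlinarith
          _ = z * 2^(n+1) := by ring
      · apply Int.floor_lt.2
        push_cast
        have := Int.lt_floor_add_one (z * 2^n)
        calc z * 2^(n+1) = 2 * (z * 2^n) := by ring
          _ < 2 * (⌊z * 2^n⌋ + 1) := by nlinarith
          _ = 2 * ⌊z * 2^n⌋ + 2 := by ring
    have hx2 := key x
    have hy2 := key y
    have hpar : ⌊x * 2^(n+1)⌋ % 2 = ⌊y * 2^(n+1)⌋ % 2 := by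
      have := congrFun h n
      simp only [dig, decide_eq_decide] at this
      omega
    omega

lemma dig_inj {x y : ℝ} (hx : x ∈ Ico (0:ℝ) 1) (hy : y ∈ Ico (0:ℝ) 1)
    (h : dig x = dig y) : x = y := by
  by_contra hne
  have habs : 0 < |x - y| := abs_pos.2 (sub_ne_zero.2 hne)
  obtain ⟨n, hn⟩ := pow_unbounded_of_one_lt (|x - y|)⁻¹ (by norm_num : (1:ℝ) < 2)
  have hfl := dig_floor_eq hx hy h n
  have h1 := Int.floor_le (x * 2^n)
  have h2 := Int.lt_floor_add_one (x * 2^n)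
  have h3 := Int.floor_le (y * 2^n)
  have h4 := Int.lt_floor_add_one (y * 2^n)
  rw [hfl] at h1 h2
  have hpow : (0:ℝ) < 2^n := by positivity
  have hlt : |x - y| * 2^n < 1 := by
    have he : |x - y| * 2^n = |(x - y) * 2^n| := by rw [abs_mul, abs_of_pos hpow]
    rw [he, abs_lt]
    constructor <;> nlinarith
  have hgt : (1:ℝ) < |x - y| * 2^n := by
    calc (1:ℝ) = |x - y| * |x - y|⁻¹ := (mul_inv_cancel₀ habs.ne').symm
      _ < |x - y| * 2^n := mul_lt_mul_of_pos_left hn habs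
  linarith


/-- A nonempty countable closed subset of ℝ in which every point is an accumulation
point is impossible (Baire). -/
lemma baire_aux {C : Set ℝ} (hcl : IsClosed C) (hcnt : C.Countable) (hne : C.Nonempty)
    (hacc : ∀ z ∈ C, ∀ δ > 0, ∃ w ∈ C, w ≠ z ∧ |w - z| < δ) : False := by
  haveI := hcnt.to_subtype
  haveI : Nonempty ↥C := hne.to_subtype
  haveI : CompleteSpace ↥C := hcl.completeSpace_coe
  obtain ⟨i, x, hx⟩ := nonempty_interior_of_iUnion_of_closed
    (X := ↥C) (ι := ↥C) (f := fun i => {i}) (fun i => isClosed_singleton)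
    (by ext z; simp)
  have hxi : x = i := mem_singleton_iff.1 ((interior_subset : interior ({i} : Set ↥C) ⊆ {i}) hx)
  subst hxi
  have hopen : IsOpen ({x} : Set ↥C) := by
    have : interior ({x} : Set ↥C) = {x} := by
      apply Subset.antisymm interior_subset
      intro y hy
      rw [mem_singleton_iff] at hy
      subst hy
      exact hx
    rw [← this]
    exact isOpen_interior
  obtain ⟨ε, hε, hball⟩ := Metric.isOpen_iff.1 hopen x rfl
  obtain ⟨w, hwC, hwne, hwd⟩ := hacc x.1 x.2 ε hε
  have : (⟨w, hwC⟩ : ↥C) ∈ Metric.ball x ε := by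
    rw [Metric.mem_ball, Subtype.dist_eq, Real.dist_eq]
    exact hwd
  have := hball this
  rw [mem_singleton_iff] at this
  exact hwne (congrArg Subtype.val this)


variable (Δ : Set (Set ℝ))

/-- union of interiors of the intervals -/
def OΔ : Set ℝ := ⋃ J ∈ Δ, interior J

/-- residual set -/
def EΔ : Set ℝ := Icc 0 1 \ OΔ Δ

lemma isOpen_OΔ : IsOpen (OΔ Δ) :=
  isOpen_biUnion fun _ _ => isOpen_interior

lemma isClosed_EΔ : IsClosed (EΔ Δ) :=
  isClosed_Icc.sdiff (isOpen_OΔ Δ)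

lemma EΔ_subset : EΔ Δ ⊆ Icc 0 1 := diff_subset

variable {Δ}
variable (hint : ∀ J ∈ Δ, ∃ a b : ℝ, 0 ≤ a ∧ a < b ∧ b ≤ 1 ∧ J = Set.Icc a b)
  (hdisj : Δ.Pairwise Disjoint)

include hint hdisj in
/-- a gap of `EΔ` inside `[0,1]` is inside a single interval -/
lemma gap_lemma {u v : ℝ} (huv : u < v) (hsub : Ioo u v ⊆ Icc 0 1)
    (hemp : Ioo u v ∩ EΔ Δ = ∅) : ∃ J ∈ Δ, Icc u v ⊆ J := by
  have hO : Ioo u v ⊆ OΔ Δ := by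
    intro z hz
    by_contra hzO
    exact (eq_empty_iff_forall_notMem.1 hemp z) ⟨hz, hsub hz, hzO⟩
  -- pick a point and its interval
  obtain ⟨p, hp⟩ := nonempty_Ioo.2 huv
  obtain ⟨J₀, hJ₀, hpJ₀⟩ := mem_iUnion₂.1 (hO hp)
  refine ⟨J₀, hJ₀, ?_⟩
  have hsub2 : Ioo u v ⊆ interior J₀ := by
    have hU : IsOpen (interior J₀) := isOpen_interior
    have hV : IsOpen (⋃ J ∈ Δ \ {J₀}, interior J) :=
      isOpen_biUnion fun _ _ => isOpen_interior
    have hdisjUV : Disjoint (interior J₀) (⋃ J ∈ Δ \ {J₀}, interior J) := by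
      rw [Set.disjoint_iff]
      rintro z ⟨hz1, hz2⟩
      obtain ⟨J, hJ, hzJ⟩ := mem_iUnion₂.1 hz2
      have : Disjoint J₀ J := hdisj hJ₀ hJ.1 (fun h => hJ.2 h.symm)
      exact this.le_bot ⟨interior_subset hz1, interior_subset hzJ⟩
    have hcover : Ioo u v ⊆ interior J₀ ∪ ⋃ J ∈ Δ \ {J₀}, interior J := by
      intro z hz
      obtain ⟨J, hJ, hzJ⟩ := mem_iUnion₂.1 (hO hz)
      by_cases hJJ : J = J₀
      · exact Or.inl (hJJ ▸ hzJ)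
      · exact Or.inr (mem_iUnion₂.2 ⟨J, ⟨hJ, fun h => hJJ (by simpa using h)⟩, hzJ⟩)
    exact IsPreconnected.subset_left_of_subset_union hU hV hdisjUV hcover
      ⟨p, hp, hpJ₀⟩ isPreconnected_Ioo
  obtain ⟨a, b, _, hab, _, hJab⟩ := hint J₀ hJ₀
  subst hJab
  have : Ioo u v ⊆ Icc a b := hsub2.trans interior_subset
  have h1 : Icc u v = closure (Ioo u v) := (closure_Ioo huv.ne).symm
  rw [h1]
  calc closure (Ioo u v) ⊆ closure (Icc a b) := closure_mono this
    _ = Icc a b := closure_eq_iff_isClosed.2 isClosed_Icc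

/-- z is the left endpoint (min) of some interval -/
def LBp (z : ℝ) : Prop := ∃ J ∈ Δ, z ∈ J ∧ ∀ y ∈ J, z ≤ y
/-- z is the right endpoint (max) of some interval -/
def RBp (z : ℝ) : Prop := ∃ J ∈ Δ, z ∈ J ∧ ∀ y ∈ J, y ≤ z

include hint hdisj in
lemma not_LB_and_RB {z : ℝ} (h1 : LBp (Δ := Δ) z) (h2 : RBp (Δ := Δ) z) : False := by
  obtain ⟨J, hJ, hzJ, hmin⟩ := h1
  obtain ⟨J', hJ', hzJ', hmax⟩ := h2
  have hJJ' : J = J' := by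
    by_contra hne
    exact (Set.disjoint_left.1 (hdisj hJ hJ' hne)) hzJ hzJ'
  subst hJJ'
  obtain ⟨a, b, _, hab, _, hJab⟩ := hint J hJ
  subst hJab
  have h1 := hmin a ⟨le_refl a, hab.le⟩
  have h2 := hmax b ⟨hab.le, le_refl b⟩
  have : z ≤ a := by linarith [h2]
  linarith [hmin a ⟨le_refl a, hab.le⟩, hmax b ⟨hab.le, le_refl b⟩]

include hint hdisj in
/-- if z is not a left endpoint, E accumulates at z from the right -/
lemma right_acc {z : ℝ} (hz : z ∈ EΔ Δ) (hz1 : z < 1) (hLB : ¬ LBp (Δ := Δ) z) :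
    ∀ δ > 0, ∃ w ∈ EΔ Δ, z < w ∧ w < z + δ := by
  intro δ hδ
  set δ' := min δ (1 - z) with hδ'def
  have hδ' : 0 < δ' := lt_min hδ (by linarith)
  by_contra hcon
  push_neg at hcon
  have hemp : Ioo z (z + δ') ∩ EΔ Δ = ∅ := by
    rw [eq_empty_iff_forall_notMem]
    rintro w ⟨⟨hw1, hw2⟩, hwE⟩
    have h3 := hcon w hwE hw1
    have h4 : δ' ≤ δ := min_le_left _ _
    linarith
  have hz0 : (0:ℝ) ≤ z := (EΔ_subset Δ hz).1
  have hsub : Ioo z (z + δ') ⊆ Icc 0 1 := by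
    intro w ⟨hw1, hw2⟩
    constructor
    · linarith
    · have : δ' ≤ 1 - z := min_le_right _ _
      linarith
  obtain ⟨J, hJ, hJsub⟩ := gap_lemma hint hdisj (by linarith : z < z + δ') hsub hemp
  obtain ⟨a, b, ha0, hab, hb1, hJab⟩ := hint J hJ
  subst hJab
  have hzJ : z ∈ Icc a b := hJsub ⟨le_refl z, by linarith⟩
  have hznotIoo : z ∉ Ioo a b := by
    intro hmem
    exact hz.2 (mem_iUnion₂.2 ⟨Icc a b, hJ, by rwa [interior_Icc]⟩)
  have hza : z = a ∨ z = b := by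
    rcases hzJ with ⟨h1, h2⟩
    rcases lt_or_eq_of_le h1 with h1' | h1'
    · rcases lt_or_eq_of_le h2 with h2' | h2'
      · exact absurd ⟨h1', h2'⟩ hznotIoo
      · exact Or.inr h2'
    · exact Or.inl h1'.symm
  rcases hza with hza | hzb
  · exact hLB ⟨Icc a b, hJ, hzJ, fun y hy => hza ▸ hy.1⟩
  · -- z = b but z + δ' ≤ b gives contradiction
    have : z + δ' ≤ b := (hJsub ⟨by linarith, le_refl _⟩).2
    linarith [hzb ▸ this]

include hint hdisj in
lemma left_acc {z : ℝ} (hz : z ∈ EΔ Δ) (hz0 : 0 < z) (hRB : ¬ RBp (Δ := Δ) z) :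
    ∀ δ > 0, ∃ w ∈ EΔ Δ, z - δ < w ∧ w < z := by
  intro δ hδ
  set δ' := min δ z with hδ'def
  have hδ' : 0 < δ' := lt_min hδ hz0
  by_contra hcon
  push_neg at hcon
  have hemp : Ioo (z - δ') z ∩ EΔ Δ = ∅ := by
    rw [eq_empty_iff_forall_notMem]
    rintro w ⟨⟨hw1, hw2⟩, hwE⟩
    have hd : δ' ≤ δ := min_le_left _ _
    have h3 := hcon w hwE (by linarith)
    linarith
  have hz1 : z ≤ 1 := (EΔ_subset Δ hz).2
  have hsub : Ioo (z - δ') z ⊆ Icc 0 1 := by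
    intro w ⟨hw1, hw2⟩
    have : δ' ≤ z := min_le_right _ _
    exact ⟨by linarith, by linarith⟩
  obtain ⟨J, hJ, hJsub⟩ := gap_lemma hint hdisj (by linarith : z - δ' < z) hsub hemp
  obtain ⟨a, b, ha0, hab, hb1, hJab⟩ := hint J hJ
  subst hJab
  have hzJ : z ∈ Icc a b := hJsub ⟨by linarith, le_refl z⟩
  have hznotIoo : z ∉ Ioo a b := by
    intro hmem
    exact hz.2 (mem_iUnion₂.2 ⟨Icc a b, hJ, by rwa [interior_Icc]⟩)
  have hza : z = a ∨ z = b := by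
    rcases hzJ with ⟨h1, h2⟩
    rcases lt_or_eq_of_le h1 with h1' | h1'
    · rcases lt_or_eq_of_le h2 with h2' | h2'
      · exact absurd ⟨h1', h2'⟩ hznotIoo
      · exact Or.inr h2'
    · exact Or.inl h1'.symm
  rcases hza with hza | hzb
  · have : a ≤ z - δ' := (hJsub ⟨le_refl _, by linarith⟩).1
    linarith [hza ▸ this]
  · exact hRB ⟨Icc a b, hJ, hzJ, fun y hy => hzb ▸ hy.2⟩

include hint hdisj in
lemma E_uncountable {p q r : ℝ} (hp : p ∈ EΔ Δ) (hq0 : 0 < q) (hqp : q < p)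
    (hpr : p < r) (hr1 : r < 1) : ¬ (EΔ Δ ∩ Icc q r).Countable := by
  intro hcnt
  by_cases hLB : LBp (Δ := Δ) p
  case neg =>
    -- p is accumulated from the right
    set r' := (p + r)/2 with hr'
    have hpr' : p < r' := by rw [hr']; linarith
    have hr'r : r' < r := by rw [hr']; linarith
    set K := EΔ Δ ∩ Icc p r' with hK
    have hKcnt : K.Countable := hcnt.mono (by
      intro z ⟨hz1, hz2⟩
      exact ⟨hz1, le_trans hqp.le hz2.1, le_trans hz2.2 hr'r.le⟩)
    have hKcl : IsClosed K := (isClosed_EΔ Δ).inter isClosed_Icc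
    have hpK : p ∈ K := ⟨hp, le_refl p, hpr'.le⟩
    have claim : ∀ z ∈ K, z ≠ r' → ∀ δ > 0, ∃ w ∈ K, w ≠ z ∧ |w - z| < δ ∧ w ≠ r' := by
      rintro z ⟨hzE, hzp, hzr'⟩ hne δ hδ
      have hzlt : z < r' := lt_of_le_of_ne hzr' hne
      have hz1 : z < 1 := by linarith
      have hz0 : 0 < z := by linarith
      by_cases hLBz : LBp (Δ := Δ) z
      · -- z is a left endpoint, so not a right endpoint; accumulate from the left
        have hRBz : ¬ RBp (Δ := Δ) z := fun h => not_LB_and_RB hint hdisj hLBz h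
        have hzp' : p < z := by
          rcases lt_or_eq_of_le hzp with h | h
          · exact h
          · exact absurd (h ▸ hLBz) hLB
        obtain ⟨w, hwE, hw1, hw2⟩ := left_acc hint hdisj hzE hz0 hRBz (min δ (z - p))
          (lt_min hδ (by linarith))
        have hwp : p < w := by
          have : z - min δ (z - p) ≥ z - (z - p) := by
            have := min_le_right δ (z - p); linarith
          linarith
        refine ⟨w, ⟨hwE, hwp.le, by linarith⟩, by linarith, ?_, by linarith⟩
        rw [abs_sub_lt_iff]
        have := min_le_left δ (z - p)
        constructor <;> linarith
      · obtain ⟨w, hwE, hw1, hw2⟩ := right_acc hint hdisj hzE hz1 hLBz (min δ ((r' - z)/2))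
          (lt_min hδ (by linarith))
        have hwr' : w < r' := by
          have := min_le_right δ ((r' - z)/2); linarith
        refine ⟨w, ⟨hwE, by linarith, hwr'.le⟩, by linarith, ?_, by linarith⟩
        rw [abs_sub_lt_iff]
        have := min_le_left δ ((r' - z)/2)
        constructor <;> linarith
    by_cases hiso : ∀ δ > 0, ∃ w ∈ K, w ≠ r' ∧ |w - r'| < δ
    · apply baire_aux hKcl hKcnt ⟨p, hpK⟩
      intro z hz δ hδ
      by_cases hzr : z = r'
      · obtain ⟨w, hwK, hwne, hwd⟩ := hiso δ hδ
        exact ⟨w, hwK, by rw [hzr]; exact hwne, by rw [hzr]; exact hwd⟩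
      · obtain ⟨w, hwK, h1, h2, _⟩ := claim z hz hzr δ hδ
        exact ⟨w, hwK, h1, h2⟩
    · push_neg at hiso
      obtain ⟨δ₀, hδ₀, hsep⟩ := hiso
      set C' := K ∩ {w | δ₀ ≤ |w - r'|} with hC'
      have hC'cl : IsClosed C' := hKcl.inter (by
        have heq : {w : ℝ | δ₀ ≤ |w - r'|} = (Metric.ball r' δ₀)ᶜ := by
          ext w; simp [Metric.mem_ball, Real.dist_eq, not_lt]
        rw [heq]
        exact isClosed_compl_iff.2 Metric.isOpen_ball)
      have hmemC' : ∀ w ∈ K, w ≠ r' → w ∈ C' := fun w hw hwne => ⟨hw, hsep w hw hwne⟩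
      have hpC' : p ∈ C' := hmemC' p hpK (by linarith)
      apply baire_aux hC'cl (hKcnt.mono inter_subset_left) ⟨p, hpC'⟩
      rintro z ⟨hzK, hzsep⟩ δ hδ
      have hzr : z ≠ r' := by
        intro h
        have hzsep' : δ₀ ≤ |z - r'| := hzsep
        rw [h, sub_self, abs_zero] at hzsep'
        exact absurd hzsep' (not_le.2 hδ₀)
      obtain ⟨w, hwK, h1, h2, h3⟩ := claim z hzK hzr δ hδ
      exact ⟨w, hmemC' w hwK h3, h1, h2⟩
  case pos =>
    have hRB : ¬ RBp (Δ := Δ) p := fun h => not_LB_and_RB hint hdisj hLB h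
    set q' := (p + q)/2 with hq'
    have hq'p : q' < p := by rw [hq']; linarith
    have hqq' : q < q' := by rw [hq']; linarith
    have hq'0 : 0 < q' := by linarith
    set K := EΔ Δ ∩ Icc q' p with hK
    have hKcnt : K.Countable := hcnt.mono (by
      intro z ⟨hz1, hz2⟩
      exact ⟨hz1, le_trans hqq'.le hz2.1, le_trans hz2.2 hpr.le⟩)
    have hKcl : IsClosed K := (isClosed_EΔ Δ).inter isClosed_Icc
    have hpK : p ∈ K := ⟨hp, hq'p.le, le_refl p⟩
    have claim : ∀ z ∈ K, z ≠ q' → ∀ δ > 0, ∃ w ∈ K, w ≠ z ∧ |w - z| < δ ∧ w ≠ q' := by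
      rintro z ⟨hzE, hzq', hzp⟩ hne δ hδ
      have hzgt : q' < z := lt_of_le_of_ne hzq' (Ne.symm hne)
      have hz1 : z < 1 := by linarith
      have hz0 : 0 < z := by linarith
      by_cases hRBz : RBp (Δ := Δ) z
      · -- z is a right endpoint, so not a left endpoint; accumulate from the right
        have hLBz : ¬ LBp (Δ := Δ) z := fun h => not_LB_and_RB hint hdisj h hRBz
        have hzp' : z < p := by
          rcases lt_or_eq_of_le hzp with h | h
          · exact h
          · exact absurd (h ▸ hRBz) hRB
        obtain ⟨w, hwE, hw1, hw2⟩ := right_acc hint hdisj hzE hz1 hLBz (min δ (p - z))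
          (lt_min hδ (by linarith))
        have hwp : w < p := by
          have := min_le_right δ (p - z); linarith
        refine ⟨w, ⟨hwE, by linarith, hwp.le⟩, by linarith, ?_, by linarith⟩
        rw [abs_sub_lt_iff]
        have := min_le_left δ (p - z)
        constructor <;> linarith
      · obtain ⟨w, hwE, hw1, hw2⟩ := left_acc hint hdisj hzE hz0 hRBz (min δ ((z - q')/2))
          (lt_min hδ (by linarith))
        have hwq' : q' < w := by
          have := min_le_left δ ((z - q')/2)
          have := min_le_right δ ((z - q')/2)
          linarith
        refine ⟨w, ⟨hwE, hwq'.le, by linarith⟩, by linarith, ?_, by linarith⟩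
        rw [abs_sub_lt_iff]
        have := min_le_left δ ((z - q')/2)
        constructor <;> linarith
    by_cases hiso : ∀ δ > 0, ∃ w ∈ K, w ≠ q' ∧ |w - q'| < δ
    · apply baire_aux hKcl hKcnt ⟨p, hpK⟩
      intro z hz δ hδ
      by_cases hzq : z = q'
      · obtain ⟨w, hwK, hwne, hwd⟩ := hiso δ hδ
        exact ⟨w, hwK, by rw [hzq]; exact hwne, by rw [hzq]; exact hwd⟩
      · obtain ⟨w, hwK, h1, h2, _⟩ := claim z hz hzq δ hδ
        exact ⟨w, hwK, h1, h2⟩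
    · push_neg at hiso
      obtain ⟨δ₀, hδ₀, hsep⟩ := hiso
      set C' := K ∩ {w | δ₀ ≤ |w - q'|} with hC'
      have hC'cl : IsClosed C' := hKcl.inter (by
        have heq : {w : ℝ | δ₀ ≤ |w - q'|} = (Metric.ball q' δ₀)ᶜ := by
          ext w; simp [Metric.mem_ball, Real.dist_eq, not_lt]
        rw [heq]
        exact isClosed_compl_iff.2 Metric.isOpen_ball)
      have hmemC' : ∀ w ∈ K, w ≠ q' → w ∈ C' := fun w hw hwne => ⟨hw, hsep w hw hwne⟩
      have hpC' : p ∈ C' := hmemC' p hpK (by linarith)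
      apply baire_aux hC'cl (hKcnt.mono inter_subset_left) ⟨p, hpC'⟩
      rintro z ⟨hzK, hzsep⟩ δ hδ
      have hzq : z ≠ q' := by
        intro h
        have hzsep' : δ₀ ≤ |z - q'| := hzsep
        rw [h, sub_self, abs_zero] at hzsep'
        exact absurd hzsep' (not_le.2 hδ₀)
      obtain ⟨w, hwK, h1, h2, h3⟩ := claim z hzK hzq δ hδ
      exact ⟨w, hmemC' w hwK h3, h1, h2⟩

include hint hdisj in
lemma exists_mu : ∃ μ : Measure ℝ, IsFiniteMeasure μ ∧ (∀ x : ℝ, μ {x} = 0) ∧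
    (∀ J ∈ Δ, μ J = 0) ∧
    (∀ x y : ℝ, 0 ≤ x → y ≤ 1 → x < y → (∀ J ∈ Δ, ¬ Icc x y ⊆ J) → 0 < μ (Ioo x y)) := by
  classical
  have key : ∀ i : ℚ × ℚ, ∃ m : Measure ℝ, m univ ≤ 1 ∧ (∀ x : ℝ, m {x} = 0) ∧
      m ((EΔ Δ ∩ Icc (i.1:ℝ) (i.2:ℝ))ᶜ) = 0 ∧
      ((0 < (i.1:ℝ) ∧ (i.2:ℝ) < 1 ∧ ¬ (EΔ Δ ∩ Icc (i.1:ℝ) (i.2:ℝ)).Countable) →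
        m univ = 1) := by
    intro i
    set C : Set ℝ := EΔ Δ ∩ Icc (i.1:ℝ) (i.2:ℝ) with hC
    have hCcl : IsClosed C := (isClosed_EΔ Δ).inter isClosed_Icc
    by_cases hGood : 0 < (i.1:ℝ) ∧ (i.2:ℝ) < 1 ∧ ¬ C.Countable
    · obtain ⟨f, hrange, hcont, hinj⟩ :=
        hCcl.exists_nat_bool_injection_of_not_countable hGood.2.2
      set h : ℝ → ℝ := fun x => f (dig x) with hh
      have hmeas : Measurable h := hcont.measurable.comp measurable_dig
      set m : Measure ℝ := Measure.map h (volume.restrict (Icc 0 1)) with hm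
      have huniv : m univ = 1 := by
        rw [hm, Measure.map_apply hmeas MeasurableSet.univ, preimage_univ,
          Measure.restrict_apply_univ, Real.volume_Icc]
        norm_num
      refine ⟨m, huniv.le, ?_, ?_, fun _ => huniv⟩
      · intro x
        rw [hm, Measure.map_apply hmeas (measurableSet_singleton x),
          Measure.restrict_apply (hmeas (measurableSet_singleton x))]
        apply measure_mono_null
          (show h ⁻¹' {x} ∩ Icc 0 1 ⊆ (h ⁻¹' {x} ∩ Ico 0 1) ∪ {1} from ?_)
        · apply Set.Countable.measure_zero
          apply Set.Countable.union _ (countable_singleton 1)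
          apply Set.Subsingleton.countable
          rintro u ⟨hu1, hu2⟩ v ⟨hv1, hv2⟩
          have : dig u = dig v := hinj (by
            simp only [mem_preimage, mem_singleton_iff] at hu1 hv1
            show h u = h v
            rw [hu1, hv1])
          exact dig_inj hu2 hv2 this
        · rintro z ⟨hz1, hz2⟩
          rcases lt_or_eq_of_le hz2.2 with h' | h'
          · exact Or.inl ⟨hz1, hz2.1, h'⟩
          · exact Or.inr (by simp [h'])
      · rw [hm, Measure.map_apply hmeas hCcl.measurableSet.compl]
        have : h ⁻¹' Cᶜ = ∅ := by
          rw [eq_empty_iff_forall_notMem]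
          intro z hz
          exact hz (hrange ⟨dig z, rfl⟩)
        rw [this]
        simp
    · exact ⟨0, by simp, by simp, by simp, fun hg => absurd hg hGood⟩
  choose ν hν1 hν2 hν3 hν4 using key
  set w : ℚ × ℚ → ENNReal := fun i => (2⁻¹ : ENNReal) ^ (Encodable.encode i) with hw
  have hwpos : ∀ i, 0 < w i := by
    intro i
    apply ENNReal.pow_pos
    norm_num
  set μ : Measure ℝ := Measure.sum (fun i => w i • ν i) with hμ
  have happ : ∀ s : Set ℝ, MeasurableSet s → μ s = ∑' i, w i * ν i s := by
    intro s hs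
    rw [hμ, Measure.sum_apply _ hs]
    congr 1
  have hfin : μ univ < ⊤ := by
    rw [happ univ MeasurableSet.univ]
    calc ∑' i, w i * ν i univ ≤ ∑' i, w i * 1 :=
          Summable.tsum_le_tsum (fun i => mul_le_mul_right (hν1 i) _) ENNReal.summable ENNReal.summable
      _ = ∑' i : ℚ × ℚ, (fun n => (2⁻¹ : ENNReal) ^ n) (Encodable.encode i) := by
          simp [hw]
      _ ≤ ∑' n : ℕ, (2⁻¹ : ENNReal) ^ n :=
          ENNReal.tsum_comp_le_tsum_of_injective Encodable.encode_injective _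
      _ = (1 - 2⁻¹)⁻¹ := ENNReal.tsum_geometric _
      _ < ⊤ := by norm_num
  refine ⟨μ, ⟨hfin⟩, ?_, ?_, ?_⟩
  · intro x
    rw [happ _ (measurableSet_singleton x)]
    simp [hν2]
  · intro J hJ
    obtain ⟨a, b, ha0, hab, hb1, hJab⟩ := hint J hJ
    subst hJab
    rw [happ _ measurableSet_Icc]
    have hzero : ∀ i, ν i (Icc a b) = 0 := by
      intro i
      have hsub : Icc a b ⊆ ({a, b} : Set ℝ) ∪ (EΔ Δ ∩ Icc (i.1:ℝ) (i.2:ℝ))ᶜ := by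
        intro z hz
        by_cases hzE : z ∈ EΔ Δ ∩ Icc (i.1:ℝ) (i.2:ℝ)
        · left
          have hznotIoo : z ∉ Ioo a b := fun hmem =>
            hzE.1.2 (mem_iUnion₂.2 ⟨Icc a b, hJ, by rwa [interior_Icc]⟩)
          rcases lt_or_eq_of_le hz.1 with h1 | h1
          · rcases lt_or_eq_of_le hz.2 with h2 | h2
            · exact absurd ⟨h1, h2⟩ hznotIoo
            · exact Or.inr h2
          · exact Or.inl h1.symm
        · exact Or.inr hzE
      have := measure_mono (μ := ν i) hsub
      have hub : ν i (({a, b} : Set ℝ) ∪ (EΔ Δ ∩ Icc (i.1:ℝ) (i.2:ℝ))ᶜ) ≤ 0 := by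
        calc ν i (({a, b} : Set ℝ) ∪ _) ≤ ν i {a, b} + ν i (EΔ Δ ∩ Icc (i.1:ℝ) (i.2:ℝ))ᶜ :=
              measure_union_le _ _
          _ ≤ ν i {a} + ν i {b} + ν i (EΔ Δ ∩ Icc (i.1:ℝ) (i.2:ℝ))ᶜ := by
              gcongr
              exact measure_union_le _ _
          _ = 0 := by rw [hν2 i a, hν2 i b, hν3 i]; simp
      simp [le_antisymm (le_trans this hub) zero_le]
    simp [hzero]
  · intro x y hx0 hy1 hxy hnotin
    -- find a point of E in the interior
    have hEnonempty : (Ioo x y ∩ EΔ Δ).Nonempty := by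
      by_contra hcon
      rw [not_nonempty_iff_eq_empty] at hcon
      obtain ⟨J, hJ, hJsub⟩ := gap_lemma hint hdisj hxy
        (fun z hz => ⟨le_trans hx0 hz.1.le, le_trans hz.2.le hy1⟩) hcon
      exact hnotin J hJ hJsub
    obtain ⟨p, hpIoo, hpE⟩ := hEnonempty
    have hp0 : 0 < p := lt_of_le_of_lt hx0 hpIoo.1
    have hp1 : p < 1 := lt_of_lt_of_le hpIoo.2 hy1
    obtain ⟨q, hq1, hq2⟩ := exists_rat_btwn hpIoo.1
    obtain ⟨r, hr1, hr2⟩ := exists_rat_btwn hpIoo.2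
    set i : ℚ × ℚ := (q, r) with hi
    have hGood : 0 < ((i.1:ℚ):ℝ) ∧ ((i.2:ℚ):ℝ) < 1 ∧
        ¬ (EΔ Δ ∩ Icc ((i.1:ℚ):ℝ) ((i.2:ℚ):ℝ)).Countable := by
      refine ⟨lt_of_le_of_lt hx0 hq1, lt_of_lt_of_le hr2 hy1, ?_⟩
      exact E_uncountable hint hdisj hpE (lt_of_le_of_lt hx0 hq1) hq2 hr1
        (lt_of_lt_of_le hr2 hy1)
    have hν4i := hν4 i hGood
    have hlower : (1:ENNReal) ≤ ν i (Ioo x y) := by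
      have hsub : (univ : Set ℝ) ⊆ Ioo x y ∪ (EΔ Δ ∩ Icc ((i.1:ℚ):ℝ) ((i.2:ℚ):ℝ))ᶜ := by
        intro z _
        by_cases hz : z ∈ Ioo x y
        · exact Or.inl hz
        · right
          intro hzC
          exact hz ⟨lt_of_lt_of_le hq1 hzC.2.1, lt_of_le_of_lt hzC.2.2 hr2⟩
      calc (1:ENNReal) = ν i univ := hν4i.symm
        _ ≤ ν i (Ioo x y ∪ _) := measure_mono hsub
        _ ≤ ν i (Ioo x y) + ν i (EΔ Δ ∩ Icc ((i.1:ℚ):ℝ) ((i.2:ℚ):ℝ))ᶜ := measure_union_le _ _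
        _ = ν i (Ioo x y) := by rw [hν3 i]; simp
    have : w i * 1 ≤ μ (Ioo x y) := by
      calc w i * 1 ≤ w i * ν i (Ioo x y) := mul_le_mul_right hlower _
        _ = (w i • ν i) (Ioo x y) := by simp
        _ ≤ μ (Ioo x y) := Measure.le_iff'.1 (Measure.le_sum _ i) _
    calc (0:ENNReal) < w i * 1 := by simpa using hwpos i
      _ ≤ μ (Ioo x y) := this

theorem stmt_11' (Δ : Set (Set ℝ))
    (hint : ∀ J ∈ Δ, ∃ a b : ℝ, 0 ≤ a ∧ a < b ∧ b ≤ 1 ∧ J = Set.Icc a b)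
    (hdisj : Δ.Pairwise Disjoint)
    (hne : Δ ≠ {Set.Icc 0 1}) :
    ∃ φ : ℝ → ℝ, (ContinuousOn φ (Set.Icc 0 1) ∧ MonotoneOn φ (Set.Icc 0 1) ∧
      Set.MapsTo φ (Set.Icc 0 1) (Set.Icc 0 1) ∧ φ 0 = 0 ∧ φ 1 = 1) ∧
      {J | ∃ t : ℝ, Set.Icc 0 1 ∩ φ ⁻¹' {t} = J ∧ J.Nontrivial} = Δ := by
  classical
  obtain ⟨μ, hfin, hatom, hnull, hpos⟩ := exists_mu hint hdisj
  have hIcc01 : ∀ J ∈ Δ, ¬ Icc (0:ℝ) 1 ⊆ J := by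
    intro J hJ hsub
    obtain ⟨a, b, ha0, hab, hb1, hJab⟩ := hint J hJ
    subst hJab
    have ha : a = 0 := le_antisymm (hsub ⟨le_refl 0, zero_le_one⟩).1 ha0
    have hb : b = 1 := le_antisymm hb1 (hsub ⟨zero_le_one, le_refl 1⟩).2
    apply hne
    ext K
    constructor
    · intro hK
      rw [mem_singleton_iff]
      by_contra hKne
      obtain ⟨a', b', ha0', hab', hb1', hKab⟩ := hint K hK
      have hd := hdisj hK hJ (fun h => hKne (by rw [h, ha, hb]))
      have : a' ∈ K := by rw [hKab]; exact ⟨le_refl a', hab'.le⟩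
      have h2 : a' ∈ Icc a b := by rw [ha, hb]; exact ⟨ha0', le_trans hab'.le hb1'⟩
      exact (Set.disjoint_left.1 hd) this h2
    · intro hK
      rw [mem_singleton_iff] at hK
      rw [hK, ← ha, ← hb] at *
      exact hJ
  have hμpos : 0 < μ (Ioo 0 1) := hpos 0 1 le_rfl le_rfl one_pos hIcc01
  have hμIcc_pos : 0 < μ (Icc 0 1) := lt_of_lt_of_le hμpos (measure_mono Ioo_subset_Icc_self)
  set M : ℝ := (μ (Icc 0 1)).toReal with hM
  have hMpos : 0 < M := ENNReal.toReal_pos hμIcc_pos.ne' (measure_ne_top μ _)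
  set φ : ℝ → ℝ := fun x => (μ (Icc 0 x)).toReal / M with hφ
  have hmono : Monotone φ := by
    intro x y hxy
    have h2 : (μ (Icc 0 x)).toReal ≤ (μ (Icc 0 y)).toReal :=
      ENNReal.toReal_mono (measure_ne_top μ _) (measure_mono (Icc_subset_Icc_right hxy))
    show (μ (Icc 0 x)).toReal / M ≤ (μ (Icc 0 y)).toReal / M
    gcongr
  have hincr : ∀ x y : ℝ, x ≤ y → φ y - φ x ≤ (μ (Ioc x y)).toReal / M := by
    intro x y hxy
    rw [hφ, div_sub_div_same]
    gcongr
    have hsub : Icc 0 y ⊆ Icc 0 x ∪ Ioc x y := by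
      intro z hz
      rcases le_or_gt z x with h | h
      · exact Or.inl ⟨hz.1, h⟩
      · exact Or.inr ⟨h, hz.2⟩
    have h1 : μ (Icc 0 y) ≤ μ (Icc 0 x) + μ (Ioc x y) :=
      le_trans (measure_mono hsub) (measure_union_le _ _)
    have h2 := ENNReal.toReal_mono
      (by exact ENNReal.add_ne_top.2 ⟨measure_ne_top μ _, measure_ne_top μ _⟩) h1
    rw [ENNReal.toReal_add (measure_ne_top μ _) (measure_ne_top μ _)] at h2
    linarith
  have hcont : Continuous φ := by
    rw [continuous_iff_continuousAt]
    intro x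
    rw [Metric.continuousAt_iff]
    intro ε hε
    have hInter : ⋂ n : ℕ, Icc (x - 1/(n+1)) (x + 1/(n+1)) = {x} := by
      ext z
      simp only [mem_iInter, mem_Icc, mem_singleton_iff]
      constructor
      · intro hz
        by_contra hzx
        have habs : 0 < |z - x| := abs_pos.2 (sub_ne_zero.2 hzx)
        obtain ⟨n, hn⟩ := exists_nat_one_div_lt habs
        have h1 := (hz n).1
        have h2 := (hz n).2
        have h3 : |z - x| ≤ 1/(n+1) := abs_sub_le_iff.2 ⟨by linarith, by linarith⟩
        linarith
      · rintro rfl n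
        have : (0:ℝ) < 1/(n+1) := by positivity
        constructor <;> linarith
    have hanti : Antitone (fun n : ℕ => Icc (x - 1/(n+1)) (x + 1/(n+1))) := by
      intro m n hmn
      have hc : (m:ℝ) ≤ (n:ℝ) := by exact_mod_cast hmn
      have hle : (1:ℝ)/(n+1) ≤ 1/(m+1) := by gcongr <;> linarith
      exact Icc_subset_Icc (by linarith) (by linarith)
    have htend := tendsto_measure_iInter_atTop (μ := μ)
      (s := fun n : ℕ => Icc (x - 1/(n+1)) (x + 1/(n+1)))
      (fun n => measurableSet_Icc.nullMeasurableSet) hanti ⟨0, measure_ne_top μ _⟩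
    rw [hInter, hatom x] at htend
    have hsmall := htend.eventually_lt_const
      (show (0:ENNReal) < ENNReal.ofReal (ε * M / 2) from ENNReal.ofReal_pos.2 (by positivity))
    obtain ⟨n, hn⟩ := hsmall.exists
    refine ⟨1/(n+1), by positivity, ?_⟩
    intro z hz
    rw [Real.dist_eq] at hz
    rw [Real.dist_eq]
    have hb : ∀ u v : ℝ, u ≤ v → v ≤ u + 1/(n+1) → x - 1/(n+1) ≤ u →
        v ≤ x + 1/(n+1) → φ v - φ u < ε := by
      intro u v huv h1 h2 h3
      have hIoc : Ioc u v ⊆ Icc (x - 1/(n+1)) (x + 1/(n+1)) := by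
        intro s hs
        exact ⟨le_trans h2 hs.1.le, le_trans hs.2 h3⟩
      have hμb : (μ (Ioc u v)).toReal < ε * M / 2 := by
        have := ENNReal.toReal_mono (measure_ne_top μ _) (measure_mono hIoc)
        have h4 : (μ (Icc (x - 1/(n+1)) (x + 1/(n+1)))).toReal < ε * M / 2 := by
          have := (ENNReal.toReal_lt_toReal (measure_ne_top μ _) ENNReal.ofReal_ne_top).2 hn
          rwa [ENNReal.toReal_ofReal (by positivity)] at this
        linarith
      have := hincr u v huv
      calc φ v - φ u ≤ (μ (Ioc u v)).toReal / M := this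
        _ < (ε * M / 2) / M := by gcongr
        _ = ε / 2 := by field_simp
        _ < ε := by linarith
    rw [abs_sub_lt_iff] at hz
    rcases le_total x z with h | h
    · have := hb x z h (by linarith) (by linarith) (by linarith)
      rw [abs_sub_lt_iff]
      constructor
      · linarith
      · have := hmono h
        linarith
    · have := hb z x h (by linarith) (by linarith) (by linarith)
      rw [abs_sub_lt_iff]
      constructor
      · have := hmono h
        linarith
      · linarith
  have hφ0 : φ 0 = 0 := by
    rw [hφ]
    simp only [Icc_self]
    rw [hatom 0]
    simp
  have hφ1 : φ 1 = 1 := by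
    rw [hφ]
    exact div_self hMpos.ne'
  have hmaps : Set.MapsTo φ (Icc 0 1) (Icc 0 1) := by
    intro x hx
    constructor
    · exact div_nonneg ENNReal.toReal_nonneg hMpos.le
    · rw [hφ, div_le_one hMpos]
      exact ENNReal.toReal_mono (measure_ne_top μ _) (measure_mono (Icc_subset_Icc_right hx.2))
  have hconst : ∀ x y : ℝ, 0 ≤ x → x ≤ y → (μ (Icc x y) = 0 ↔ φ x = φ y) := by
    intro x y hx0 hxy
    have hunion : Icc 0 y = Icc 0 x ∪ Ioc x y := by
      ext z
      simp only [mem_Icc, mem_union, mem_Ioc]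
      constructor
      · rintro ⟨h1, h2⟩
        rcases le_or_gt z x with h | h
        · exact Or.inl ⟨h1, h⟩
        · exact Or.inr ⟨h, h2⟩
      · rintro (⟨h1, h2⟩ | ⟨h1, h2⟩)
        · exact ⟨h1, le_trans h2 hxy⟩
        · exact ⟨le_trans hx0 h1.le, h2⟩
    have hdisj2 : Disjoint (Icc 0 x) (Ioc x y) := by
      rw [Set.disjoint_left]
      rintro z ⟨_, h2⟩ ⟨h3, _⟩
      exact absurd h3 (not_lt.2 h2)
    have hadd : μ (Icc 0 y) = μ (Icc 0 x) + μ (Ioc x y) := by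
      rw [hunion, measure_union hdisj2 measurableSet_Ioc]
    constructor
    · intro h
      have hIoc : μ (Ioc x y) = 0 :=
        le_antisymm (le_trans (measure_mono Ioc_subset_Icc_self) h.le) zero_le
      rw [hφ]
      simp only
      rw [hadd, hIoc, add_zero]
    · intro h
      have htr : (μ (Icc 0 x)).toReal = (μ (Icc 0 y)).toReal := by
        have h' : (μ (Icc 0 x)).toReal / M = (μ (Icc 0 y)).toReal / M := h
        field_simp at h'
        exact h'
      have hENN : μ (Icc 0 x) = μ (Icc 0 y) :=
        (ENNReal.toReal_eq_toReal_iff' (measure_ne_top μ _) (measure_ne_top μ _)).1 htr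
      have hIoc : μ (Ioc x y) = 0 := by
        have h2 : μ (Icc 0 x) + μ (Ioc x y) = μ (Icc 0 x) + 0 := by
          rw [← hadd, ← hENN, add_zero]
        exact (ENNReal.add_right_inj (measure_ne_top μ _)).1 h2
      apply le_antisymm _ zero_le
      calc μ (Icc x y) ≤ μ ({x} ∪ Ioc x y) := by
            apply measure_mono
            intro z hz
            rcases eq_or_lt_of_le hz.1 with h' | h'
            · exact Or.inl (by simp [← h'])
            · exact Or.inr ⟨h', hz.2⟩
        _ ≤ μ {x} + μ (Ioc x y) := measure_union_le _ _
        _ = 0 := by rw [hatom, hIoc, add_zero]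
  have hnullJ : ∀ x y : ℝ, 0 ≤ x → y ≤ 1 → x < y → μ (Icc x y) = 0 →
      ∃ J ∈ Δ, Icc x y ⊆ J := by
    intro x y hx0 hy1 hxy h0
    by_contra hcon
    push_neg at hcon
    have h1 := hpos x y hx0 hy1 hxy hcon
    have h2 : μ (Ioo x y) ≤ 0 := h0 ▸ measure_mono Ioo_subset_Icc_self
    exact absurd (lt_of_lt_of_le h1 h2) (lt_irrefl 0)
  have hlevel : ∀ t : ℝ, ∀ L : Set ℝ, L = Icc 0 1 ∩ φ ⁻¹' {t} → L.Nonempty →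
      sInf L ∈ L ∧ sSup L ∈ L ∧ L = Icc (sInf L) (sSup L) := by
    intro t L hLdef hne'
    have hLsub : L ⊆ Icc 0 1 := hLdef ▸ inter_subset_left
    have hLcl : IsClosed L := hLdef ▸ (isClosed_Icc.inter (isClosed_singleton.preimage hcont))
    have hbb : BddBelow L := (bddBelow_Icc : BddBelow (Icc (0:ℝ) 1)).mono hLsub
    have hba : BddAbove L := (bddAbove_Icc : BddAbove (Icc (0:ℝ) 1)).mono hLsub
    have hInf := hLcl.csInf_mem hne' hbb
    have hSup := hLcl.csSup_mem hne' hba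
    refine ⟨hInf, hSup, ?_⟩
    apply Subset.antisymm
    · intro z hz
      exact ⟨csInf_le hbb hz, le_csSup hba hz⟩
    · intro z hz
      have hsubpre : L ⊆ φ ⁻¹' {t} := by rw [hLdef]; exact inter_subset_right
      have hφInf : φ (sInf L) = t := by simpa using hsubpre hInf
      have hφSup : φ (sSup L) = t := by simpa using hsubpre hSup
      have h1 : φ (sInf L) ≤ φ z := hmono hz.1
      have h2 : φ z ≤ φ (sSup L) := hmono hz.2
      rw [hLdef]
      refine ⟨⟨le_trans ((hLsub hInf).1) hz.1, le_trans hz.2 ((hLsub hSup).2)⟩, ?_⟩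
      simp only [mem_preimage, mem_singleton_iff]
      rw [hφInf] at h1
      rw [hφSup] at h2
      linarith
  refine ⟨φ, ⟨hcont.continuousOn, hmono.monotoneOn _, hmaps, hφ0, hφ1⟩, ?_⟩
  ext J'
  simp only [mem_setOf_eq]
  constructor
  · rintro ⟨t, hLJ, hnt⟩
    have hne' : (Icc 0 1 ∩ φ ⁻¹' {t} : Set ℝ).Nonempty := by
      rw [hLJ]
      exact hnt.nonempty
    obtain ⟨hInf, hSup, hEq⟩ := hlevel t _ rfl hne'
    set L : Set ℝ := Icc 0 1 ∩ φ ⁻¹' {t} with hLdef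
    set u := sInf L with hu
    set v := sSup L with hv
    have huv : u < v := by
      by_contra hcon
      push_neg at hcon
      obtain ⟨x₀, hx₀, y₀, hy₀, hxy₀⟩ := hnt
      rw [← hLJ, hEq] at hx₀ hy₀
      have : x₀ = y₀ := by
        have e1 : x₀ = u := le_antisymm (le_trans hx₀.2 hcon) hx₀.1
        have e2 : y₀ = u := le_antisymm (le_trans hy₀.2 hcon) hy₀.1
        rw [e1, e2]
      exact hxy₀ this
    have hu0 : 0 ≤ u := hInf.1.1
    have hv1 : v ≤ 1 := hSup.1.2
    have hφu : φ u = t := hInf.2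
    have hφv : φ v = t := hSup.2
    have hμuv : μ (Icc u v) = 0 := (hconst u v hu0 huv.le).2 (by rw [hφu, hφv])
    obtain ⟨J, hJ, hJsub⟩ := hnullJ u v hu0 hv1 huv hμuv
    obtain ⟨a, b, ha0, hab, hb1, hJab⟩ := hint J hJ
    subst hJab
    have hμab : μ (Icc a b) = 0 := hnull _ hJ
    have hau : a ≤ u := (hJsub ⟨le_refl u, huv.le⟩).1
    have hvb : v ≤ b := (hJsub ⟨huv.le, le_refl v⟩).2
    have hφa : φ a = t := by
      have h1 : φ a = φ b := (hconst a b ha0 hab.le).1 hμab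
      have h2 : φ a ≤ φ u := hmono hau
      have h3 : φ v ≤ φ b := hmono hvb
      rw [hφu] at h2
      rw [hφv] at h3
      rw [← h1] at h3
      linarith
    have hJL : Icc a b ⊆ L := by
      intro z hz
      have h1 : φ a ≤ φ z := hmono hz.1
      have h2 : φ z ≤ φ b := hmono hz.2
      have h3 : φ b = φ a := ((hconst a b ha0 hab.le).1 hμab).symm
      refine ⟨⟨le_trans ha0 hz.1, le_trans hz.2 hb1⟩, ?_⟩
      simp only [mem_preimage, mem_singleton_iff]
      rw [h3] at h2
      rw [hφa] at h1 h2
      linarith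
    have hJ'eq : J' = Icc a b := by
      apply Subset.antisymm
      · rw [← hLJ, hEq]
        exact hJsub
      · rw [← hLJ]
        exact hJL
    rw [hJ'eq]
    exact hJ
  · intro hJ'
    obtain ⟨a, b, ha0, hab, hb1, hJab⟩ := hint J' hJ'
    subst hJab
    have hμab : μ (Icc a b) = 0 := hnull _ hJ'
    set t := φ a with ht
    have hφab : φ a = φ b := (hconst a b ha0 hab.le).1 hμab
    have hJL : Icc a b ⊆ Icc 0 1 ∩ φ ⁻¹' {t} := by
      intro z hz
      have h1 : φ a ≤ φ z := hmono hz.1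
      have h2 : φ z ≤ φ b := hmono hz.2
      rw [← hφab] at h2
      refine ⟨⟨le_trans ha0 hz.1, le_trans hz.2 hb1⟩, ?_⟩
      simp only [mem_preimage, mem_singleton_iff]
      linarith [le_antisymm h2 h1]
    have hne' : (Icc 0 1 ∩ φ ⁻¹' {t} : Set ℝ).Nonempty :=
      ⟨a, hJL ⟨le_refl a, hab.le⟩⟩
    obtain ⟨hInf, hSup, hEq⟩ := hlevel t _ rfl hne'
    set L : Set ℝ := Icc 0 1 ∩ φ ⁻¹' {t} with hLdef
    set u := sInf L with hu
    set v := sSup L with hv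
    have haL : a ∈ L := hJL ⟨le_refl a, hab.le⟩
    have hbL : b ∈ L := hJL ⟨hab.le, le_refl b⟩
    have hua : u ≤ a := by
      have := hEq ▸ haL
      exact this.1
    have hbv : b ≤ v := by
      have := hEq ▸ hbL
      exact this.2
    have huv : u < v := lt_of_le_of_lt hua (lt_of_lt_of_le hab hbv)
    have hu0 : 0 ≤ u := hInf.1.1
    have hv1 : v ≤ 1 := hSup.1.2
    have hμuv : μ (Icc u v) = 0 :=
      (hconst u v hu0 huv.le).2 (by rw [hInf.2, hSup.2])
    obtain ⟨J'', hJ'', hJsub''⟩ := hnullJ u v hu0 hv1 huv hμuv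
    have haJ'' : a ∈ J'' := hJsub'' ⟨hua, le_trans hab.le hbv⟩
    have hJeq : J'' = Icc a b := by
      by_contra hcon
      have hd := hdisj hJ'' hJ' hcon
      exact (Set.disjoint_left.1 hd) haJ'' ⟨le_refl a, hab.le⟩
    refine ⟨t, ?_, ?_⟩
    · apply Subset.antisymm
      · show L ⊆ Icc a b
        rw [hEq]
        exact hJeq ▸ hJsub''
      · show Icc a b ⊆ L
        exact hJL
    · exact ⟨a, ⟨le_refl a, hab.le⟩, b, ⟨hab.le, le_refl b⟩, hab.ne⟩


end AuxStopProof

/-- For every family `Δ ≠ {[0,1]}` of pairwise disjoint non-degenerate closed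
subintervals of `[0,1]`, there is a reparametrization whose set of stop
intervals is exactly `Δ`. -/
theorem stmt_11 (Δ : Set (Set ℝ))
    (hint : ∀ J ∈ Δ, ∃ a b : ℝ, 0 ≤ a ∧ a < b ∧ b ≤ 1 ∧ J = Set.Icc a b)
    (hdisj : Δ.Pairwise Disjoint)
    (hne : Δ ≠ {Set.Icc 0 1}) :
    ∃ φ : ℝ → ℝ, Reparam φ ∧ {J | IsStopIntervalOf φ J} = Δ := by
  obtain ⟨φ, h1, h2⟩ := stmt_11' Δ hint hdisj hne
  exact ⟨φ, h1, h2⟩
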